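/- arXiv:2504.15136 — 3 statements merged into one kernel-verified Lean document; each statement's English description precedes it below -/
import Mathlib

section
/- Let p ∈ (1,2) and set c(p) = p(p−1)/2. For all real numbers y and u with max(|y|, |y+u|) ≠ 0, one has |y+u|^p − |y|^p − p·|y|^{p−1}·sgn(y)·u ≥ c(p)·u²·(max(|y|², |y+u|²))^{(p−2)/2}. -/
open Set Filter

section Aux
variable {p : ℝ}

private lemma abs_rpow_deriv_eq (hp1 : 1 < p) (hp2 : p < 2) (x : ℝ) :
    p * |x| ^ (p - 1) * Real.sign x = p * |x| ^ (p - 2) * x := by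
  rcases lt_trichotomy x 0 with hx | hx | hx
  · rw [Real.sign_of_neg hx, abs_of_neg hx,
      show p - 1 = (p - 2) + 1 by ring, Real.rpow_add_one' (by linarith) (by linarith)]
    ring
  · subst hx
    simp [Real.zero_rpow (show p - 1 ≠ 0 by linarith)]
  · rw [Real.sign_of_pos hx, abs_of_pos hx,
      show p - 1 = (p - 2) + 1 by ring, Real.rpow_add_one' (by linarith) (by linarith)]
    ring

private lemma hasDerivAt_D (hp1 : 1 < p) {x : ℝ} (hx : x ≠ 0) :
    HasDerivAt (fun z : ℝ => p * |z| ^ (p - 2) * z) (p * (p - 1) * |x| ^ (p - 2)) x := by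
  rcases hx.lt_or_gt with hx | hx
  · have hg : HasDerivAt (fun w : ℝ => w ^ (p - 1)) ((p - 1) * (-x) ^ (p - 1 - 1)) (-x) :=
      Real.hasDerivAt_rpow_const (Or.inl (by linarith))
    have h1 : HasDerivAt (fun z : ℝ => -(p * (-z) ^ (p - 1)))
        (p * (p - 1) * (-x) ^ (p - 2)) x := by
      have h2 := ((hg.comp x (hasDerivAt_neg x)).const_mul p).neg
      exact h2.congr_deriv (by ring_nf)
    have heq : (fun z : ℝ => p * |z| ^ (p - 2) * z) =ᶠ[nhds x]
        fun z : ℝ => -(p * (-z) ^ (p - 1)) := by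
      filter_upwards [Iio_mem_nhds hx] with z hz
      have hz' : z < 0 := hz
      rw [abs_of_neg hz', show p - 1 = (p - 2) + 1 by ring,
        Real.rpow_add_one' (by linarith) (by linarith)]
      ring
    rw [show |x| = -x from abs_of_neg hx]
    exact h1.congr_of_eventuallyEq heq
  · have hg : HasDerivAt (fun w : ℝ => w ^ (p - 1)) ((p - 1) * x ^ (p - 1 - 1)) x :=
      Real.hasDerivAt_rpow_const (Or.inl hx.ne')
    have h1 : HasDerivAt (fun z : ℝ => p * z ^ (p - 1)) (p * (p - 1) * x ^ (p - 2)) x := by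
      have h2 := hg.const_mul p
      exact h2.congr_deriv (by ring_nf)
    have heq : (fun z : ℝ => p * |z| ^ (p - 2) * z) =ᶠ[nhds x]
        fun z : ℝ => p * z ^ (p - 1) := by
      filter_upwards [Ioi_mem_nhds hx] with z hz
      have hz' : 0 < z := hz
      rw [abs_of_pos hz', show p - 1 = (p - 2) + 1 by ring,
        Real.rpow_add_one' (by linarith) (by linarith)]
      ring
    rw [show |x| = x from abs_of_pos hx]
    exact h1.congr_of_eventuallyEq heq

private lemma continuous_D (hp1 : 1 < p) :
    Continuous (fun z : ℝ => p * |z| ^ (p - 2) * z) := by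
  have h1 := contDiff_norm_rpow (E := ℝ) hp1
  rw [contDiff_one_iff_deriv] at h1
  have h2 : (deriv fun x : ℝ => ‖x‖ ^ p) = fun z : ℝ => p * |z| ^ (p - 2) * z := by
    funext z
    have h3 : HasDerivAt (fun x : ℝ => ‖x‖ ^ p) (p * |z| ^ (p - 2) * z) z := by
      simpa [Real.norm_eq_abs] using hasDerivAt_abs_rpow z hp1
    exact h3.deriv
  rw [h2] at h1
  exact h1.2

end Aux

/-- Pointwise convexity inequality for `x ↦ |x|^p` with `p ∈ (1,2)`: for all `y, u ∈ ℝ` with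
`max(|y|,|y+u|) ≠ 0`,
`|y+u|^p − |y|^p − p |y|^(p−1) sgn(y) u ≥ (p(p−1)/2) u² (max(|y|²,|y+u|²))^((p−2)/2)`. -/
theorem second_order_remainder_lower_bound (p : ℝ) (hp1 : 1 < p) (hp2 : p < 2) (y u : ℝ)
    (h : max |y| |y + u| ≠ 0) :
    p * (p - 1) / 2 * u ^ 2 * (max (y ^ 2) ((y + u) ^ 2)) ^ ((p - 2) / 2)
      ≤ |y + u| ^ p - |y| ^ p - p * |y| ^ (p - 1) * Real.sign y * u := by
  rw [abs_rpow_deriv_eq hp1 hp2]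
  set M : ℝ := max |y| |y + u| with hMdef
  have hM0 : 0 ≤ M := le_trans (abs_nonneg y) (le_max_left _ _)
  have hM : 0 < M := hM0.lt_of_ne (Ne.symm h)
  -- rewrite the max of squares
  have hmaxsq : max (y ^ 2) ((y + u) ^ 2) = M ^ 2 := by
    rw [← sq_abs y, ← sq_abs (y + u)]
    rcases le_total |y| |y + u| with h1 | h1
    · rw [max_eq_right (pow_le_pow_left₀ (abs_nonneg _) h1 2), hMdef, max_eq_right h1]
    · rw [max_eq_left (pow_le_pow_left₀ (abs_nonneg _) h1 2), hMdef, max_eq_left h1]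
  have hMexp : (M ^ 2 : ℝ) ^ ((p - 2) / 2) = M ^ (p - 2) := by
    rw [← Real.rpow_natCast M 2, ← Real.rpow_mul hM0]
    congr 1
    push_cast
    ring
  rw [hmaxsq, hMexp]
  -- trivial case u = 0
  by_cases hu : u = 0
  · subst hu
    simp
  -- main case
  set K : ℝ := p * (p - 1) * u ^ 2 * M ^ (p - 2) with hKdef
  set D : ℝ → ℝ := fun z => p * |z| ^ (p - 2) * z with hDdef
  set G : ℝ → ℝ := fun t => |y + t * u| ^ p - |y| ^ p - D y * u * t - K / 2 * t ^ 2 with hGdef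
  set G' : ℝ → ℝ := fun t => D (y + t * u) * u - D y * u - K * t with hG'def
  have hinner : ∀ t : ℝ, HasDerivAt (fun t : ℝ => y + t * u) u t := fun t => by
    simpa using ((hasDerivAt_id t).mul_const u).const_add y
  have habs : ∀ x : ℝ, HasDerivAt (fun z : ℝ => |z| ^ p) (D x) x := fun x => by
    simpa [hDdef] using hasDerivAt_abs_rpow x hp1
  have hG : ∀ t : ℝ, HasDerivAt G (G' t) t := by
    intro t
    have h1 : HasDerivAt (fun t : ℝ => |y + t * u| ^ p) (D (y + t * u) * u) t :=
      by have := (habs (y + t * u)).comp t (hinner t); exact this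
    have h2 := ((h1.sub_const (|y| ^ p)).sub ((hasDerivAt_id t).const_mul (D y * u))).sub
      ((hasDerivAt_pow 2 t).const_mul (K / 2))
    exact h2.congr_deriv (by simp only [hG'def]; ring)
  have hG' : ∀ t : ℝ, y + t * u ≠ 0 →
      HasDerivAt G' (p * (p - 1) * |y + t * u| ^ (p - 2) * u ^ 2 - K) t := by
    intro t ht
    have h1 : HasDerivAt (fun t : ℝ => D (y + t * u))
        (p * (p - 1) * |y + t * u| ^ (p - 2) * u) t :=
      by have := (hasDerivAt_D hp1 ht).comp t (hinner t); exact this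
    have h2 := ((h1.mul_const u).sub_const (D y * u)).sub ((hasDerivAt_id t).const_mul K)
    exact h2.congr_deriv (by ring)
  have hcontG' : Continuous G' := by
    apply Continuous.sub
    · exact ((continuous_D hp1).comp (continuous_const.add (continuous_id.mul
        continuous_const))).mul continuous_const |>.sub continuous_const
    · exact continuous_const.mul continuous_id
  -- the bound |y + t*u| ≤ M for t ∈ [0,1]
  have hbound : ∀ t : ℝ, 0 ≤ t → t ≤ 1 → |y + t * u| ≤ M := by
    intro t ht0 ht1
    have h1 : y + t * u = (1 - t) * y + t * (y + u) := by ring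
    rw [h1]
    calc |(1 - t) * y + t * (y + u)| ≤ |(1 - t) * y| + |t * (y + u)| := abs_add_le _ _
      _ = (1 - t) * |y| + t * |y + u| := by
          rw [abs_mul, abs_mul, abs_of_nonneg (by linarith : (0:ℝ) ≤ 1 - t),
            abs_of_nonneg ht0]
      _ ≤ (1 - t) * M + t * M := by
          gcongr
          · exact le_max_left _ _
          · exact le_max_right _ _
      _ = M := by ring
  -- monotonicity of G' on subintervals avoiding the zero of y + t*u
  have hclaim : ∀ a b : ℝ, 0 ≤ a → b ≤ 1 → a ≤ b →
      (∀ t ∈ Ioo a b, y + t * u ≠ 0) → G' a ≤ G' b := by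
    intro a b ha hb hab havoid
    have hmono : MonotoneOn G' (Icc a b) := by
      apply monotoneOn_of_hasDerivWithinAt_nonneg (convex_Icc a b) hcontG'.continuousOn
        (f' := fun t => p * (p - 1) * |y + t * u| ^ (p - 2) * u ^ 2 - K)
      · rw [interior_Icc]
        intro t ht
        exact (hG' t (havoid t ht)).hasDerivWithinAt
      · rw [interior_Icc]
        intro t ht
        have ht0 : 0 ≤ t := le_trans ha ht.1.le
        have ht1 : t ≤ 1 := le_trans ht.2.le hb
        have hne : y + t * u ≠ 0 := havoid t ht
        have hpos : 0 < |y + t * u| := abs_pos.mpr hne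
        have hle : |y + t * u| ≤ M := hbound t ht0 ht1
        have hr : M ^ (p - 2) ≤ |y + t * u| ^ (p - 2) :=
          Real.rpow_le_rpow_of_nonpos hpos hle (by linarith)
        have hc : (0:ℝ) ≤ p * (p - 1) * u ^ 2 :=
          mul_nonneg (mul_nonneg (by linarith : (0:ℝ) ≤ p) (by linarith : (0:ℝ) ≤ p - 1))
            (sq_nonneg u)
        have h3 := mul_le_mul_of_nonneg_left hr hc
        rw [hKdef]
        nlinarith [h3]
    exact hmono (left_mem_Icc.mpr hab) (right_mem_Icc.mpr hab) hab
  have hG'0 : G' 0 = 0 := by simp [hG'def]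
  -- G' nonneg on [0,1]
  have hG'nonneg : ∀ t ∈ Icc (0:ℝ) 1, 0 ≤ G' t := by
    intro t ht
    set t₀ : ℝ := -y / u with ht₀def
    have hroot : ∀ s : ℝ, y + s * u = 0 ↔ s = t₀ := by
      intro s
      rw [ht₀def]
      constructor
      · intro hs
        field_simp
        linarith
      · intro hs
        subst hs
        field_simp
        ring
    by_cases hmem : t₀ ∈ Ioo 0 t
    · have h01 : G' 0 ≤ G' t₀ := by
        apply hclaim 0 t₀ le_rfl (le_trans hmem.2.le ht.2) hmem.1.le
        intro s hs hcon
        exact absurd ((hroot s).mp hcon) hs.2.ne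
      have h02 : G' t₀ ≤ G' t := by
        apply hclaim t₀ t hmem.1.le ht.2 hmem.2.le
        intro s hs hcon
        exact absurd ((hroot s).mp hcon) hs.1.ne'
      linarith [hG'0]
    · have h01 : G' 0 ≤ G' t := by
        apply hclaim 0 t le_rfl ht.2 ht.1
        intro s hs hcon
        exact hmem (((hroot s).mp hcon) ▸ hs)
      linarith [hG'0]
  -- G monotone on [0,1]
  have hGmono : MonotoneOn G (Icc (0:ℝ) 1) := by
    apply monotoneOn_of_hasDerivWithinAt_nonneg (convex_Icc 0 1)
      (f' := G') (fun t _ => (hG t).continuousAt.continuousWithinAt)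
    · rw [interior_Icc]
      exact fun t _ => (hG t).hasDerivWithinAt
    · rw [interior_Icc]
      exact fun t ht => hG'nonneg t (Ioo_subset_Icc_self ht)
  have hfinal : G 0 ≤ G 1 :=
    hGmono (left_mem_Icc.mpr zero_le_one) (right_mem_Icc.mpr zero_le_one) zero_le_one
  have hG0 : G 0 = 0 := by simp [hGdef]
  have hG1 : G 1 = |y + u| ^ p - |y| ^ p - D y * u - K / 2 := by
    simp [hGdef]
  rw [hG0, hG1] at hfinal
  rw [hKdef] at hfinal
  have hDy : D y = p * |y| ^ (p - 2) * y := rfl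
  rw [hDy] at hfinal
  linarith [hfinal]
end

section
/- Let p ∈ (1,2), β ≥ 0, T > 0. Let A : [0,T] → [0,∞) be a measurable nondecreasing function, Y : [0,T] → ℝ and Z : [0,T] → ℝ^d measurable. Then (∫₀ᵀ e^{βA_s}|Z_s|² 1_{{Y_s ≠ 0}} ds)^{p/2} ≤ ((2−p)/2)·sup_{t∈[0,T]} e^{(p/2)βA_t}|Y_t|^p + (p/2)·∫₀ᵀ e^{(p/2)βA_s}|Y_s|^{p−2}|Z_s|² 1_{{Y_s ≠ 0}} ds, where the supremum is taken in [0,∞] and the inequality is understood in the extended reals. -/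
open MeasureTheory Set ENNReal

/-- Pathwise estimate for the `p/2`-th power of the weighted quadratic variation of the
Brownian component: for `p ∈ (1,2)`, `β ≥ 0`, `T > 0`, `A : [0,T] → [0,∞)` measurable
nondecreasing, `Y : [0,T] → ℝ`, `Z : [0,T] → ℝ^d` measurable,
`(∫₀ᵀ e^{βA_s}|Z_s|² 1_{Y_s ≠ 0} ds)^{p/2}
  ≤ ((2−p)/2)·sup_{t∈[0,T]} e^{(p/2)βA_t}|Y_t|^p
    + (p/2)·∫₀ᵀ e^{(p/2)βA_s}|Y_s|^{p−2}|Z_s|² 1_{Y_s ≠ 0} ds`,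
understood in the extended reals. -/
theorem quadratic_variation_estimate (p β T : ℝ) (hp1 : 1 < p) (hp2 : p < 2)
    (hβ : 0 ≤ β) (hT : 0 < T) (d : ℕ) (A Y : ℝ → ℝ) (Z : ℝ → EuclideanSpace ℝ (Fin d))
    (hA : Measurable A) (hA0 : ∀ s ∈ Icc (0 : ℝ) T, 0 ≤ A s)
    (hAmono : MonotoneOn A (Icc (0 : ℝ) T))
    (hY : Measurable Y) (hZ : Measurable Z) :
    (∫⁻ s in Icc (0 : ℝ) T,
        ENNReal.ofReal (Real.exp (β * A s) * ‖Z s‖ ^ 2 * (if Y s ≠ 0 then 1 else 0))) ^ (p / 2)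
      ≤ ENNReal.ofReal ((2 - p) / 2) *
          (⨆ t ∈ Icc (0 : ℝ) T, ENNReal.ofReal (Real.exp (p / 2 * β * A t) * |Y t| ^ p))
        + ENNReal.ofReal (p / 2) *
          ∫⁻ s in Icc (0 : ℝ) T,
            ENNReal.ofReal (Real.exp (p / 2 * β * A s) * |Y s| ^ (p - 2) * ‖Z s‖ ^ 2 *
              (if Y s ≠ 0 then 1 else 0)) := by
  have hp0 : (0:ℝ) < p := lt_trans one_pos hp1
  have h2p : (0:ℝ) < 2 - p := by linarith
  set S : ℝ≥0∞ := ⨆ t ∈ Icc (0 : ℝ) T, ENNReal.ofReal (Real.exp (p / 2 * β * A t) * |Y t| ^ p)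
    with hS
  set J : ℝ≥0∞ := ∫⁻ s in Icc (0 : ℝ) T,
      ENNReal.ofReal (Real.exp (p / 2 * β * A s) * |Y s| ^ (p - 2) * ‖Z s‖ ^ 2 *
        (if Y s ≠ 0 then 1 else 0)) with hJ
  by_cases hStop : S = ⊤
  · rw [hStop, ENNReal.mul_top (by simp; linarith)]
    exact le_top.trans_eq (by simp)
  -- pointwise bound
  have key : ∀ s ∈ Icc (0:ℝ) T,
      ENNReal.ofReal (Real.exp (β * A s) * ‖Z s‖ ^ 2 * (if Y s ≠ 0 then 1 else 0))
        ≤ S ^ ((2 - p) / p) *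
          ENNReal.ofReal (Real.exp (p / 2 * β * A s) * |Y s| ^ (p - 2) * ‖Z s‖ ^ 2 *
            (if Y s ≠ 0 then 1 else 0)) := by
    intro s hs
    by_cases hYs : Y s = 0
    · simp [hYs]
    have hYpos : 0 < |Y s| := abs_pos.mpr hYs
    have hexp2 : Real.exp ((2-p)/2 * (β * A s)) * Real.exp (p / 2 * β * A s)
        = Real.exp (β * A s) := by
      rw [← Real.exp_add]; ring_nf
    have hy2 : |Y s| ^ ((2:ℝ) - p) * |Y s| ^ (p - 2) = 1 := by
      rw [← Real.rpow_add hYpos]; norm_num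
    have hreal : Real.exp (β * A s) * ‖Z s‖ ^ 2 * (if Y s ≠ 0 then 1 else 0)
        = (Real.exp (p / 2 * β * A s) * |Y s| ^ p) ^ ((2 - p) / p) *
          (Real.exp (p / 2 * β * A s) * |Y s| ^ (p - 2) * ‖Z s‖ ^ 2 *
            (if Y s ≠ 0 then 1 else 0)) := by
      rw [if_pos hYs, mul_one, mul_one,
        Real.mul_rpow (Real.exp_nonneg _) (Real.rpow_nonneg (abs_nonneg _) _),
        ← Real.exp_mul, ← Real.rpow_mul (abs_nonneg _),
        show p / 2 * β * A s * ((2 - p) / p) = (2-p)/2 * (β * A s) by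
          field_simp,
        show p * ((2 - p) / p) = 2 - p by field_simp]
      calc Real.exp (β * A s) * ‖Z s‖ ^ 2
          = (Real.exp ((2-p)/2 * (β * A s)) * Real.exp (p / 2 * β * A s)) *
            (|Y s| ^ ((2:ℝ) - p) * |Y s| ^ (p - 2)) * ‖Z s‖ ^ 2 := by
            rw [hexp2, hy2]; ring
        _ = _ := by ring
    rw [hreal, ENNReal.ofReal_mul (Real.rpow_nonneg (by positivity) _),
      ← ENNReal.ofReal_rpow_of_nonneg (by positivity) (by positivity)]
    refine mul_le_mul_left (ENNReal.rpow_le_rpow ?_ (by positivity)) _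
    exact le_biSup (fun t => ENNReal.ofReal (Real.exp (p / 2 * β * A t) * |Y t| ^ p)) hs
  have hSne : S ^ ((2 - p) / p) ≠ ⊤ := ENNReal.rpow_ne_top_of_nonneg (by positivity) hStop
  have hint : (∫⁻ s in Icc (0 : ℝ) T,
      ENNReal.ofReal (Real.exp (β * A s) * ‖Z s‖ ^ 2 * (if Y s ≠ 0 then 1 else 0)))
      ≤ S ^ ((2 - p) / p) * J := by
    rw [hJ, ← lintegral_const_mul' _ _ hSne]
    exact lintegral_mono_ae ((ae_restrict_iff' measurableSet_Icc).2 (ae_of_all _ key))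
  have hpow := ENNReal.rpow_le_rpow hint (by positivity : (0:ℝ) ≤ p / 2)
  rw [ENNReal.mul_rpow_of_nonneg _ _ (by positivity), ← ENNReal.rpow_mul,
    show (2 - p) / p * (p / 2) = (2 - p) / 2 by field_simp] at hpow
  refine hpow.trans ?_
  have hconj : ((2:ℝ)/(2-p)).HolderConjugate (2/p) := by
    rw [Real.holderConjugate_iff]
    constructor
    · rw [lt_div_iff₀ h2p]; linarith
    · rw [inv_div, inv_div]; field_simp; ring
  have hyoung := ENNReal.young_inequality (S ^ ((2 - p) / 2)) (J ^ (p / 2)) hconj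
  rw [← ENNReal.rpow_mul, ← ENNReal.rpow_mul,
    show (2 - p) / 2 * (2 / (2 - p)) = 1 by field_simp,
    show p / 2 * (2 / p) = 1 by field_simp,
    ENNReal.rpow_one, ENNReal.rpow_one] at hyoung
  refine hyoung.trans (le_of_eq ?_)
  rw [ENNReal.div_eq_inv_mul, ENNReal.div_eq_inv_mul,
    ← ENNReal.ofReal_inv_of_pos (by positivity), ← ENNReal.ofReal_inv_of_pos (by positivity),
    inv_div, inv_div]
end

section
/- Let p ∈ (1,2), β ≥ 0, and let (S, 𝒮, m) be a measure space. Let A : S → [0,∞), Y : S → ℝ and U : S → ℝ be measurable. Then (∫_S e^{βA}|U|² dm)^{p/2} ≤ ((2−p)/2)·sup_{s∈S} e^{(p/2)βA(s)}(max(|Y(s)|, |Y(s)+U(s)|))^p + (p/2)·∫_S e^{(p/2)βA}|U|²·(max(|Y|², |Y+U|²))^{(p−2)/2}·1_{{max(|Y|,|Y+U|) ≠ 0}} dm, where the supremum is taken in [0,∞] and the inequality is understood in the extended reals. -/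
open MeasureTheory Set ENNReal

lemma ennreal_young2 {w₁ w₂ : ℝ} (hw₁ : 0 < w₁) (hw₂ : 0 < w₂) (hw : w₁ + w₂ = 1)
    (x y : ℝ≥0∞) :
    x ^ w₁ * y ^ w₂ ≤ ENNReal.ofReal w₁ * x + ENNReal.ofReal w₂ * y := by
  have hw₁' : ENNReal.ofReal w₁ ≠ 0 := by
    simp [ENNReal.ofReal_eq_zero, not_le, hw₁]
  have hw₂' : ENNReal.ofReal w₂ ≠ 0 := by
    simp [ENNReal.ofReal_eq_zero, not_le, hw₂]
  by_cases hx : x = ⊤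
  · rcases eq_or_ne y 0 with hy | hy
    · simp [hy, ENNReal.zero_rpow_of_pos hw₂]
    · have h : ENNReal.ofReal w₁ * x = ⊤ := by
        rw [hx, ENNReal.mul_top hw₁']
      calc x ^ w₁ * y ^ w₂ ≤ ⊤ := le_top
        _ = ENNReal.ofReal w₁ * x + ENNReal.ofReal w₂ * y := by rw [h, top_add]
  by_cases hy : y = ⊤
  · rcases eq_or_ne x 0 with hx0 | hx0
    · simp [hx0, ENNReal.zero_rpow_of_pos hw₁]
    · have h : ENNReal.ofReal w₂ * y = ⊤ := by
        rw [hy, ENNReal.mul_top hw₂']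
      calc x ^ w₁ * y ^ w₂ ≤ ⊤ := le_top
        _ = ENNReal.ofReal w₁ * x + ENNReal.ofReal w₂ * y := by rw [h, add_top]
  lift x to NNReal using hx
  lift y to NNReal using hy
  have hsum : w₁.toNNReal + w₂.toNNReal = 1 := by
    rw [← Real.toNNReal_add hw₁.le hw₂.le, hw]; simp
  have h := NNReal.geom_mean_le_arith_mean2_weighted w₁.toNNReal w₂.toNNReal x y hsum
  rw [← ENNReal.coe_rpow_of_nonneg _ hw₁.le, ← ENNReal.coe_rpow_of_nonneg _ hw₂.le,
    ← ENNReal.coe_mul, ENNReal.ofReal, ENNReal.ofReal, ← ENNReal.coe_mul, ← ENNReal.coe_mul,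
    ← ENNReal.coe_add, ENNReal.coe_le_coe]
  simpa [Real.coe_toNNReal _ hw₁.le, Real.coe_toNNReal _ hw₂.le] using h

/-- Estimate for the `p/2`-th moment of the jump part: for `p ∈ (1,2)`, `β ≥ 0`, a measure
space `(S, 𝒮, m)` and measurable `A : S → [0,∞)`, `Y, U : S → ℝ`,
`(∫_S e^{βA}|U|² dm)^{p/2}
  ≤ ((2−p)/2)·sup_{s∈S} e^{(p/2)βA(s)}(|Y(s)|∨|Y(s)+U(s)|)^p
    + (p/2)·∫_S e^{(p/2)βA}|U|² (|Y|²∨|Y+U|²)^{(p−2)/2} 1_{|Y|∨|Y+U| ≠ 0} dm`,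
understood in the extended reals. -/
theorem jump_moment_estimate (p β : ℝ) (hp1 : 1 < p) (hp2 : p < 2) (hβ : 0 ≤ β)
    {S : Type*} [MeasurableSpace S] (m : Measure S)
    (A Y U : S → ℝ) (hA : Measurable A) (hA0 : ∀ s, 0 ≤ A s)
    (hY : Measurable Y) (hU : Measurable U) :
    (∫⁻ s, ENNReal.ofReal (Real.exp (β * A s) * (U s) ^ 2) ∂m) ^ (p / 2)
      ≤ ENNReal.ofReal ((2 - p) / 2) *
          (⨆ s, ENNReal.ofReal
            (Real.exp (p / 2 * β * A s) * (max |Y s| |Y s + U s|) ^ p))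
        + ENNReal.ofReal (p / 2) *
          ∫⁻ s, ENNReal.ofReal
            (Real.exp (p / 2 * β * A s) * (U s) ^ 2 *
              (max ((Y s) ^ 2) ((Y s + U s) ^ 2)) ^ ((p - 2) / 2) *
              (if max |Y s| |Y s + U s| ≠ 0 then 1 else 0)) ∂m := by
  have hp0 : (0:ℝ) < p := by linarith
  set C : ℝ≥0∞ := ⨆ s, ENNReal.ofReal
      (Real.exp (p / 2 * β * A s) * (max |Y s| |Y s + U s|) ^ p) with hC
  set I : ℝ≥0∞ := ∫⁻ s, ENNReal.ofReal
      (Real.exp (p / 2 * β * A s) * (U s) ^ 2 *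
        (max ((Y s) ^ 2) ((Y s + U s) ^ 2)) ^ ((p - 2) / 2) *
        (if max |Y s| |Y s + U s| ≠ 0 then 1 else 0)) ∂m with hI
  have hw₁ : (0:ℝ) < (2 - p) / 2 := by linarith
  have hw₂ : (0:ℝ) < p / 2 := by linarith
  by_cases hCtop : C = ⊤
  · have h : ENNReal.ofReal ((2 - p) / 2) * C = ⊤ := by
      rw [hCtop, ENNReal.mul_top (by simp [ENNReal.ofReal_eq_zero, not_le, hw₁])]
    rw [h, top_add]
    exact le_top
  set q : ℝ := (2 - p) / p with hq
  have hq0 : 0 ≤ q := div_nonneg (by linarith) hp0.le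
  -- pointwise estimate
  have hpt : ∀ s, ENNReal.ofReal (Real.exp (β * A s) * (U s) ^ 2) ≤
      C ^ q * ENNReal.ofReal
        (Real.exp (p / 2 * β * A s) * (U s) ^ 2 *
          (max ((Y s) ^ 2) ((Y s + U s) ^ 2)) ^ ((p - 2) / 2) *
          (if max |Y s| |Y s + U s| ≠ 0 then 1 else 0)) := by
    intro s
    by_cases hM0 : max |Y s| |Y s + U s| = 0
    · have hY0 : |Y s| = 0 := le_antisymm (hM0 ▸ le_max_left _ _) (abs_nonneg _)
      have hYU0 : |Y s + U s| = 0 := le_antisymm (hM0 ▸ le_max_right _ _) (abs_nonneg _)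
      have hU0 : U s = 0 := by
        have h1 : Y s = 0 := abs_eq_zero.mp hY0
        have h2 : Y s + U s = 0 := abs_eq_zero.mp hYU0
        linarith
      simp [hU0]
    · set M : ℝ := max |Y s| |Y s + U s| with hM
      have hMpos : 0 < M :=
        lt_of_le_of_ne (le_trans (abs_nonneg _) (le_max_left _ _)) (Ne.symm hM0)
      have hmax2 : max ((Y s) ^ 2) ((Y s + U s) ^ 2) = M ^ 2 := by
        rw [hM]
        rcases le_total |Y s| |Y s + U s| with h | h
        · rw [max_eq_right h, ← sq_abs (Y s), ← sq_abs (Y s + U s),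
            max_eq_right (pow_le_pow_left₀ (abs_nonneg _) h 2)]
        · rw [max_eq_left h, ← sq_abs (Y s), ← sq_abs (Y s + U s),
            max_eq_left (pow_le_pow_left₀ (abs_nonneg _) h 2)]
      have hapos : 0 < Real.exp (p / 2 * β * A s) * M ^ p :=
        mul_pos (Real.exp_pos _) (Real.rpow_pos_of_pos hMpos _)
      -- real-valued key identity
      have e1 : (Real.exp (p / 2 * β * A s)) ^ q = Real.exp ((2 - p) / 2 * (β * A s)) := by
        rw [← Real.exp_mul]
        congr 1
        rw [hq]
        field_simp [hp0.ne']
      have e2 : (M ^ p) ^ q = M ^ (2 - p) := by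
        rw [← Real.rpow_mul hMpos.le]
        congr 1
        rw [hq]
        field_simp [hp0.ne']
      have e3 : ((M ^ (2:ℕ) : ℝ)) ^ ((p - 2) / 2) = M ^ (p - 2) := by
        rw [← Real.rpow_natCast M 2, ← Real.rpow_mul hMpos.le]
        congr 1
        push_cast
        ring
      have e4 : Real.exp ((2 - p) / 2 * (β * A s)) * Real.exp (p / 2 * β * A s)
          = Real.exp (β * A s) := by
        rw [← Real.exp_add]
        congr 1
        ring
      have e5 : M ^ (2 - p) * M ^ (p - 2) = 1 := by
        rw [← Real.rpow_add hMpos]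
        norm_num
      have key : Real.exp (β * A s) * (U s) ^ 2 =
          (Real.exp (p / 2 * β * A s) * M ^ p) ^ q *
            (Real.exp (p / 2 * β * A s) * (U s) ^ 2 * (M ^ (2:ℕ) : ℝ) ^ ((p - 2) / 2) * 1) := by
        rw [Real.mul_rpow (Real.exp_pos _).le (Real.rpow_nonneg hMpos.le _), e1, e2, e3]
        calc Real.exp (β * A s) * (U s) ^ 2
            = (Real.exp ((2 - p) / 2 * (β * A s)) * Real.exp (p / 2 * β * A s)) *
                (M ^ (2 - p) * M ^ (p - 2)) * (U s) ^ 2 := by rw [e4, e5]; ring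
          _ = Real.exp ((2 - p) / 2 * (β * A s)) * M ^ (2 - p) *
                (Real.exp (p / 2 * β * A s) * (U s) ^ 2 * M ^ (p - 2) * 1) := by ring
      rw [hmax2, if_pos hM0, key,
        ENNReal.ofReal_mul (Real.rpow_nonneg hapos.le _),
        ← ENNReal.ofReal_rpow_of_pos hapos]
      refine mul_le_mul_left (ENNReal.rpow_le_rpow ?_ hq0) _
      exact le_iSup (fun s => ENNReal.ofReal
        (Real.exp (p / 2 * β * A s) * (max |Y s| |Y s + U s|) ^ p)) s
  have hint : (∫⁻ s, ENNReal.ofReal (Real.exp (β * A s) * (U s) ^ 2) ∂m) ≤ C ^ q * I := by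
    calc (∫⁻ s, ENNReal.ofReal (Real.exp (β * A s) * (U s) ^ 2) ∂m)
        ≤ ∫⁻ s, C ^ q * ENNReal.ofReal
            (Real.exp (p / 2 * β * A s) * (U s) ^ 2 *
              (max ((Y s) ^ 2) ((Y s + U s) ^ 2)) ^ ((p - 2) / 2) *
              (if max |Y s| |Y s + U s| ≠ 0 then 1 else 0)) ∂m := lintegral_mono hpt
      _ = C ^ q * I := lintegral_const_mul' _ _ (ENNReal.rpow_ne_top_of_nonneg hq0 hCtop)
  calc (∫⁻ s, ENNReal.ofReal (Real.exp (β * A s) * (U s) ^ 2) ∂m) ^ (p / 2)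
      ≤ (C ^ q * I) ^ (p / 2) := ENNReal.rpow_le_rpow hint hw₂.le
    _ = C ^ (q * (p / 2)) * I ^ (p / 2) := by
        rw [ENNReal.mul_rpow_of_nonneg _ _ hw₂.le, ← ENNReal.rpow_mul]
    _ = C ^ ((2 - p) / 2) * I ^ (p / 2) := by
        have hqe : q * (p / 2) = (2 - p) / 2 := by
          rw [hq]; field_simp
        rw [hqe]
    _ ≤ ENNReal.ofReal ((2 - p) / 2) * C + ENNReal.ofReal (p / 2) * I :=
        ennreal_young2 hw₁ hw₂ (by ring) C I
end
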